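/- arXiv:2012.05773 — 4 statements merged into one kernel-verified Lean document; each statement's English description precedes it below -/
import Mathlib

section
/- Let ι be a type with decidable equality, V : ι → Type a family of value types, S a set of indices, and f : (Π i, V i) → ℝ a function such that f a = f b whenever a i = b i for all i ∈ S. Fix x ∈ S and an assignment a : Π i, V i. Suppose f a < f (Function.update a x v) for every v : V x with v ≠ a x. Then for every assignment a' : Π i, V i with a' x ≠ a x and a' z = a z for all z ∈ S with z ≠ x, we have f a < f a'. -/
/-- Attack clause of Proposition 4: monotonic attacks satisfy dialectical
monotonicity. -/
theorem monotonic_attack_dialectical_monotonicity {ι : Type*} [DecidableEq ι]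
    {V : ι → Type*} (S : Set ι) (f : (∀ i, V i) → ℝ)
    (hf : ∀ a b : ∀ i, V i, (∀ i ∈ S, a i = b i) → f a = f b)
    (x : ι) (hx : x ∈ S) (a : ∀ i, V i)
    (hatt : ∀ v : V x, v ≠ a x → f a < f (Function.update a x v)) :
    ∀ a' : ∀ i, V i, a' x ≠ a x → (∀ z ∈ S, z ≠ x → a' z = a z) → f a < f a' := by
  intro a' hne hag
  have h := hatt (a' x) hne
  have : f (Function.update a x (a' x)) = f a' := by
    apply hf
    intro i hi
    by_cases hix : i = x
    · subst hix; simp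
    · rw [Function.update_of_ne hix]; exact (hag i hi hix).symm
  linarith
end

section
/- Let ι be a type with decidable equality, V : ι → Type a family of value types, S a set of indices, and f : (Π i, V i) → ℝ a function such that f a = f b whenever a i = b i for all i ∈ S. Fix x ∈ S and an assignment a : Π i, V i. Suppose f a > f (Function.update a x v) for every v : V x with v ≠ a x. Then for every assignment a' : Π i, V i with a' x ≠ a x and a' z = a z for all z ∈ S with z ≠ x, we have f a > f a'. -/
/-- Support clause of Proposition 4: monotonic supports satisfy dialectical
monotonicity. -/
theorem monotonic_support_dialectical_monotonicity {ι : Type*} [DecidableEq ι]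
    {V : ι → Type*} (S : Set ι) (f : (∀ i, V i) → ℝ)
    (hf : ∀ a b : ∀ i, V i, (∀ i ∈ S, a i = b i) → f a = f b)
    (x : ι) (hx : x ∈ S) (a : ∀ i, V i)
    (hsup : ∀ v : V x, v ≠ a x → f a > f (Function.update a x v)) :
    ∀ a' : ∀ i, V i, a' x ≠ a x → (∀ z ∈ S, z ≠ x → a' z = a z) → f a > f a' := by
  intro a' hne hag
  have h : f a' = f (Function.update a x (a' x)) := by
    apply hf
    intro i hi
    by_cases hix : i = x
    · subst hix; simp
    · rw [Function.update_of_ne hix]; exact hag i hi hix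
  rw [h]
  exact hsup _ hne
end

section
/- Let V be a finite type, v₀ ∈ V, and for each v ∈ V let p_v : Bool → ℝ satisfy p_v b ≥ 0 for all b : Bool and p_v true + p_v false = 1. Let c : Bool satisfy p_{v₀} c > p_{v₀} (!c). If for every v ≠ v₀ we have p_v (!c) > p_v c, then for every v ≠ v₀ we have p_v c < p_{v₀} c. -/
/-- First half of Proposition 5: for a binary explanandum, every critical
influence of a CF-IDX is a monotonic support of the MD-IDX. -/
theorem critical_influence_is_monotonic_support {V : Type*} [Fintype V]
    (v₀ : V) (p : V → Bool → ℝ)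
    (hp : ∀ v b, 0 ≤ p v b) (hp1 : ∀ v, p v true + p v false = 1)
    (c : Bool) (hc : p v₀ c > p v₀ (!c))
    (hcrit : ∀ v ≠ v₀, p v (!c) > p v c) :
    ∀ v ≠ v₀, p v c < p v₀ c := by
  intro v hv
  have h3 := hcrit v hv
  have h1 := hp1 v
  have h2 := hp1 v₀
  cases c <;> simp only [Bool.not_true, Bool.not_false] at h3 hc ⊢ <;> linarith
end

section
/- Let V be a finite type, v₀ ∈ V, and for each v ∈ V let p_v : Bool → ℝ satisfy p_v b ≥ 0 for all b : Bool and p_v true + p_v false = 1. Let c : Bool satisfy p_{v₀} c > p_{v₀} (!c), and suppose for every v ≠ v₀ we have p_v (!c) > p_v c. Let w : V → ℝ satisfy w v ≥ 0 for all v and ∑_{v ≠ v₀} w v > 0. Then p_{v₀} c > (∑_{v ≠ v₀} w v · p_v c) / (∑_{v ≠ v₀} w v). -/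
/-- Second half of Proposition 5: for a binary explanandum, every critical
influence of a CF-IDX is a stochastic support of the SD-IDX. -/
theorem critical_influence_is_stochastic_support {V : Type*} [Fintype V] [DecidableEq V]
    (v₀ : V) (p : V → Bool → ℝ)
    (hp : ∀ v b, 0 ≤ p v b) (hp1 : ∀ v, p v true + p v false = 1)
    (c : Bool) (hc : p v₀ c > p v₀ (!c))
    (hcrit : ∀ v ≠ v₀, p v (!c) > p v c)
    (w : V → ℝ) (hw : ∀ v, 0 ≤ w v)
    (hs : 0 < ∑ v ∈ Finset.univ.filter (fun v => v ≠ v₀), w v) :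
    p v₀ c > (∑ v ∈ Finset.univ.filter (fun v => v ≠ v₀), w v * p v c) /
      (∑ v ∈ Finset.univ.filter (fun v => v ≠ v₀), w v) := by
  have hsum : ∀ v, p v c + p v (!c) = 1 := by
    intro v; cases c <;> simpa [add_comm] using hp1 v
  have hlt : ∀ v ≠ v₀, p v c < p v₀ c := by
    intro v hv
    have h1 : 2 * p v c < 1 := by
      have := hcrit v hv; nlinarith [hsum v]
    have h2 : 1 < 2 * p v₀ c := by nlinarith [hsum v₀]
    linarith
  rw [gt_iff_lt, div_lt_iff₀ hs]
  obtain ⟨i, hi, hwi⟩ : ∃ i ∈ Finset.univ.filter (fun v => v ≠ v₀), 0 < w i := by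
    by_contra h
    push_neg at h
    have : (∑ v ∈ Finset.univ.filter (fun v => v ≠ v₀), w v) ≤ 0 :=
      Finset.sum_nonpos fun v hv => h v hv
    linarith
  calc (∑ v ∈ Finset.univ.filter (fun v => v ≠ v₀), w v * p v c)
      < ∑ v ∈ Finset.univ.filter (fun v => v ≠ v₀), w v * p v₀ c := by
        apply Finset.sum_lt_sum
        · intro v hv
          have hv' : v ≠ v₀ := (Finset.mem_filter.mp hv).2
          exact mul_le_mul_of_nonneg_left (le_of_lt (hlt v hv')) (hw v)
        · exact ⟨i, hi, by
            have hi' : i ≠ v₀ := (Finset.mem_filter.mp hi).2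
            exact mul_lt_mul_of_pos_left (hlt i hi') hwi⟩
    _ = p v₀ c * ∑ v ∈ Finset.univ.filter (fun v => v ≠ v₀), w v := by
        rw [Finset.mul_sum]; simp [mul_comm]
end
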